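/- Let R be an n×n nonnegative matrix with entries ≤ 1, and for each j let R_j be the matrix equal to the identity except that its j-th column is the j-th column of R. If w > 0 is a row vector with wR ≤ μw componentwise for some μ ≤ 1, then w(R₁R₂⋯R_n) ≤ μw componentwise. -/

import Mathlib

open Matrix

/-- `colMat R j` is the identity matrix with column `j` replaced by column `j`
of `R`. -/
def colMat {n : ℕ} (R : Matrix (Fin n) (Fin n) ℝ) (j : Fin n) :
    Matrix (Fin n) (Fin n) ℝ :=
  Matrix.of fun i k => if k = j then R i j else if i = k then 1 else 0

/-- The scan matrix `R⃗ = R₁ R₂ ⋯ Rₙ`. -/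
def scanMat {n : ℕ} (R : Matrix (Fin n) (Fin n) ℝ) : Matrix (Fin n) (Fin n) ℝ :=
  ((List.finRange n).map (colMat R)).prod

lemma vecMul_colMat {n : ℕ} (R : Matrix (Fin n) (Fin n) ℝ) (v : Fin n → ℝ)
    (j k : Fin n) :
    (v ᵥ* colMat R j) k = if k = j then ∑ i, v i * R i j else v k := by
  simp only [Matrix.vecMul, dotProduct, colMat, Matrix.of_apply]
  split_ifs with h
  · rfl
  · simp [mul_ite]

lemma scan_aux {n : ℕ} (R : Matrix (Fin n) (Fin n) ℝ)
    (hR : ∀ i j, 0 ≤ R i j)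
    (w : Fin n → ℝ) (hw : ∀ i, 0 < w i) (μ : ℝ) (hμ : μ ≤ 1)
    (hwR : ∀ j, (w ᵥ* R) j ≤ μ * w j) :
    ∀ (L : List (Fin n)), L.Nodup → ∀ (v : Fin n → ℝ), (∀ k, v k ≤ w k) →
      (∀ k, (v ᵥ* (L.map (colMat R)).prod) k ≤ w k) ∧
      (∀ j ∈ L, (v ᵥ* (L.map (colMat R)).prod) j ≤ μ * w j) ∧
      (∀ j ∉ L, (v ᵥ* (L.map (colMat R)).prod) j = v j) := by
  intro L
  induction L with
  | nil =>
    intro _ v hv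
    exact ⟨by simpa using hv, by simp, by simp⟩
  | cons a L ih =>
    intro hnd v hv
    obtain ⟨ha, hnd'⟩ := List.nodup_cons.mp hnd
    set v' := v ᵥ* colMat R a with hv'def
    have hva : v' a ≤ μ * w a := by
      rw [hv'def, vecMul_colMat, if_pos rfl]
      calc ∑ i, v i * R i a ≤ ∑ i, w i * R i a :=
            Finset.sum_le_sum fun i _ => mul_le_mul_of_nonneg_right (hv i) (hR i a)
        _ = (w ᵥ* R) a := rfl
        _ ≤ μ * w a := hwR a
    have hv'w : ∀ k, v' k ≤ w k := by
      intro k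
      rcases eq_or_ne k a with h | h
      · subst h
        exact hva.trans (by nlinarith [hw k])
      · rw [hv'def, vecMul_colMat, if_neg h]; exact hv k
    obtain ⟨h1, h2, h3⟩ := ih hnd' v' hv'w
    have hprod : ∀ k, (v ᵥ* ((a :: L).map (colMat R)).prod) k
        = (v' ᵥ* (L.map (colMat R)).prod) k := by
      intro k
      simp [Matrix.vecMul_vecMul, ← Matrix.vecMul_vecMul, hv'def]
    refine ⟨fun k => (hprod k) ▸ h1 k, ?_, ?_⟩
    · intro j hj
      rw [hprod j]
      rcases List.mem_cons.mp hj with h | h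
      · subst h
        rw [h3 j ha]
        exact hva
      · exact h2 j h
    · intro j hj
      have hja : j ≠ a := fun h => hj (h ▸ List.mem_cons_self (a := a) (l := L))
      have hjL : j ∉ L := fun h => hj (List.mem_cons_of_mem a h)
      rw [hprod j, h3 j hjL, hv'def, vecMul_colMat, if_neg hja]

theorem vecMul_scanMat_le {n : ℕ} (R : Matrix (Fin n) (Fin n) ℝ)
    (hR : ∀ i j, 0 ≤ R i j) (hR1 : ∀ i j, R i j ≤ 1)
    (w : Fin n → ℝ) (hw : ∀ i, 0 < w i) (μ : ℝ) (hμ : μ ≤ 1)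
    (hwR : ∀ j, (w ᵥ* R) j ≤ μ * w j) :
    ∀ j, (w ᵥ* scanMat R) j ≤ μ * w j := by
  intro j
  have := (scan_aux R hR w hw μ hμ hwR (List.finRange n)
    (List.nodup_finRange n) w (fun k => le_refl _)).2.1
  exact this j (List.mem_finRange j)
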